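/- Let x and y be two distinct points in the Euclidean plane ℝ², and let z be a point with z ∉ {x,y} such that the angle ∠xzy is at least 2π/3. Then ‖x−z‖+‖y−z‖ ≤ (2/√3)·‖x−y‖. Equivalently, the lens α(xy) with α = 2π/3 is contained in the ellipse E(xy) = {w ∈ ℝ² : ‖x−w‖+‖y−w‖ ≤ (2/√3)‖x−y‖}. -/
import Mathlib


/-- if `x ≠ y`, `z ∉ {x, y}` and the angle `∠ x z y` is at least `2π/3`,
then `‖x - z‖ + ‖y - z‖ ≤ (2/√3) ‖x - y‖`; i.e. the `2π/3`-lens of the segment `xy`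
is contained in the ellipse `E(xy)`. -/
theorem lens_subset_ellipse (x y z : EuclideanSpace ℝ (Fin 2))
    (hxy : x ≠ y) (hzx : z ≠ x) (hzy : z ≠ y)
    (hangle : 2 * Real.pi / 3 ≤ EuclideanGeometry.angle x z y) :
    ‖x - z‖ + ‖y - z‖ ≤ (2 / Real.sqrt 3) * ‖x - y‖ := by
  set a := ‖x - z‖ with ha
  set b := ‖y - z‖ with hb
  set c := ‖x - y‖ with hc
  have ha0 : 0 ≤ a := norm_nonneg _
  have hb0 : 0 ≤ b := norm_nonneg _
  have hc0 : 0 ≤ c := norm_nonneg _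
  have hlaw : c ^ 2 = a ^ 2 + b ^ 2 -
      2 * a * b * Real.cos (EuclideanGeometry.angle x z y) := by
    have := EuclideanGeometry.law_cos x z y
    simpa [dist_eq_norm, ha, hb, hc, pow_two] using this
  have hcos : Real.cos (EuclideanGeometry.angle x z y) ≤ -(1/2) := by
    have h1 : Real.cos (EuclideanGeometry.angle x z y) ≤ Real.cos (2 * Real.pi / 3) := by
      apply Real.cos_le_cos_of_nonneg_of_le_pi
      · positivity
      · exact EuclideanGeometry.angle_le_pi _ _ _
      · exact hangle
    have h2 : Real.cos (2 * Real.pi / 3) = -(1/2) := by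
      have : (2 : ℝ) * Real.pi / 3 = Real.pi - Real.pi / 3 := by ring
      rw [this, Real.cos_pi_sub, Real.cos_pi_div_three]
    linarith
  have hsq : (a + b) ^ 2 ≤ (4 / 3) * c ^ 2 := by nlinarith [sq_nonneg (a - b), mul_le_mul_of_nonneg_left hcos (mul_nonneg ha0 hb0)]
  have h3 : (0:ℝ) < Real.sqrt 3 := by positivity
  have h3sq : Real.sqrt 3 ^ 2 = 3 := Real.sq_sqrt (by norm_num)
  have hrhs : ((2 / Real.sqrt 3) * c) ^ 2 = (4/3) * c ^ 2 := by
    field_simp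
    nlinarith [h3sq]
  have : (a + b) ^ 2 ≤ ((2 / Real.sqrt 3) * c) ^ 2 := by rw [hrhs]; exact hsq
  have hposr : 0 ≤ (2 / Real.sqrt 3) * c := by positivity
  nlinarith [this, hposr, add_nonneg ha0 hb0]
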